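/- arXiv:1704.02701 — 2 statements merged into one kernel-verified Lean document; each statement's English description precedes it below -/
import Mathlib

section
/- For every positive integer n, the ratio of Gamma function products ∏_{j=0}^{n-1} [Γ((n+3+j)/2)Γ(1/2) / (Γ((4+j)/2)Γ((1+j)/2)Γ((2+j)/2))] divided by ∏_{j=0}^{n-1} [Γ((n+2+j)/2)Γ(1/2) / (Γ((1+j)/2)Γ((1+j)/2)Γ((4+j)/2))] equals Γ((2n+2)/2)Γ(1/2) / (Γ((n+2)/2)Γ((n+1)/2)), which equals 2^n. -/
lemma telescope' (f : ℕ → ℝ) (hf : ∀ j, f j ≠ 0) (n : ℕ) :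
    ∏ j ∈ Finset.range n, f j / f (j + 1) = f 0 / f n := by
  induction n with
  | zero => simp [div_self (hf 0)]
  | succ n ih =>
      rw [Finset.prod_range_succ, ih, div_mul_div_comm,
        mul_comm (f 0), mul_div_mul_left _ _ (hf n)]

lemma telescope (f : ℕ → ℝ) (hf : ∀ j, f j ≠ 0) (n : ℕ) :
    ∏ j ∈ Finset.range n, f (j + 1) / f j = f n / f 0 := by
  induction n with
  | zero => simp [div_self (hf 0)]
  | succ n ih =>
      rw [Finset.prod_range_succ, ih, div_mul_div_comm, mul_comm (f n),
        mul_div_mul_right _ _ (hf n)]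

/-- ratio of Gamma products equals Γ((2n+2)/2)Γ(1/2)/(Γ((n+2)/2)Γ((n+1)/2)),
which equals 2^n. -/
theorem stmt0 (n : ℕ) (hn : 0 < n) :
    (∏ j ∈ Finset.range n,
        Real.Gamma (((n : ℝ) + 3 + j) / 2) * Real.Gamma (1 / 2) /
          (Real.Gamma ((4 + (j : ℝ)) / 2) * Real.Gamma ((1 + (j : ℝ)) / 2) *
            Real.Gamma ((2 + (j : ℝ)) / 2))) /
      (∏ j ∈ Finset.range n,
        Real.Gamma (((n : ℝ) + 2 + j) / 2) * Real.Gamma (1 / 2) /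
          (Real.Gamma ((1 + (j : ℝ)) / 2) * Real.Gamma ((1 + (j : ℝ)) / 2) *
            Real.Gamma ((4 + (j : ℝ)) / 2))) =
      Real.Gamma ((2 * (n : ℝ) + 2) / 2) * Real.Gamma (1 / 2) /
        (Real.Gamma (((n : ℝ) + 2) / 2) * Real.Gamma (((n : ℝ) + 1) / 2)) ∧
    Real.Gamma ((2 * (n : ℝ) + 2) / 2) * Real.Gamma (1 / 2) /
        (Real.Gamma (((n : ℝ) + 2) / 2) * Real.Gamma (((n : ℝ) + 1) / 2)) = 2 ^ n := by
  have hpos : ∀ x : ℝ, 0 < x → Real.Gamma x ≠ 0 := fun x hx =>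
    (Real.Gamma_pos_of_pos hx).ne'
  set f : ℕ → ℝ := fun j => Real.Gamma (((n : ℝ) + 2 + j) / 2) with hfdef
  set g : ℕ → ℝ := fun j => Real.Gamma ((1 + (j : ℝ)) / 2) with hgdef
  have hf : ∀ j, f j ≠ 0 := fun j => hpos _ (by positivity)
  have hg : ∀ j, g j ≠ 0 := fun j => hpos _ (by positivity)
  constructor
  · rw [← Finset.prod_div_distrib]
    have key : ∀ j ∈ Finset.range n,
        (Real.Gamma (((n : ℝ) + 3 + j) / 2) * Real.Gamma (1 / 2) /
          (Real.Gamma ((4 + (j : ℝ)) / 2) * Real.Gamma ((1 + (j : ℝ)) / 2) *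
            Real.Gamma ((2 + (j : ℝ)) / 2))) /
        (Real.Gamma (((n : ℝ) + 2 + j) / 2) * Real.Gamma (1 / 2) /
          (Real.Gamma ((1 + (j : ℝ)) / 2) * Real.Gamma ((1 + (j : ℝ)) / 2) *
            Real.Gamma ((4 + (j : ℝ)) / 2))) =
        (f (j + 1) / f j) * (g j / g (j + 1)) := by
      intro j _
      have h1 : f (j + 1) = Real.Gamma (((n : ℝ) + 3 + j) / 2) := by
        simp only [hfdef]; push_cast; ring_nf
      have h2 : g (j + 1) = Real.Gamma ((2 + (j : ℝ)) / 2) := by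
        simp only [hgdef]; push_cast; ring_nf
      rw [← h1, ← h2]
      rw [show Real.Gamma (((n : ℝ) + 2 + j) / 2) = f j from rfl,
        show Real.Gamma ((1 + (j : ℝ)) / 2) = g j from rfl]
      have hfj := hf j
      have hgj := hg j
      have hfj1 := hf (j + 1)
      have hgj1 := hg (j + 1)
      have h4 : Real.Gamma ((4 + (j : ℝ)) / 2) ≠ 0 := hpos _ (by positivity)
      have hh : Real.Gamma ((1:ℝ) / 2) ≠ 0 := hpos _ (by norm_num)
      field_simp
    rw [Finset.prod_congr rfl key, Finset.prod_mul_distrib, telescope f hf,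
      telescope' g hg]
    have e1 : f n = Real.Gamma ((2 * (n : ℝ) + 2) / 2) := by
      simp only [hfdef]; ring_nf
    have e2 : f 0 = Real.Gamma (((n : ℝ) + 2) / 2) := by
      simp only [hfdef]; norm_num
    have e3 : g 0 = Real.Gamma ((1:ℝ) / 2) := by
      simp only [hgdef]; norm_num
    have e4 : g n = Real.Gamma (((n : ℝ) + 1) / 2) := by
      simp only [hgdef]; ring_nf
    rw [e1, e2, e3, e4, div_mul_div_comm]
  · have := Real.Gamma_mul_Gamma_add_half (((n : ℝ) + 1) / 2)
    have h1 : ((n : ℝ) + 1) / 2 + 1 / 2 = ((n : ℝ) + 2) / 2 := by ring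
    have h2 : 2 * (((n : ℝ) + 1) / 2) = (n : ℝ) + 1 := by ring
    have h3 : (1 : ℝ) - 2 * (((n : ℝ) + 1) / 2) = -(n : ℝ) := by ring
    rw [h1] at this
    rw [show (1 : ℝ) - 2 * (((n:ℝ) + 1) / 2) = -(n:ℝ) by ring, h2] at this
    have hA : Real.Gamma ((2 * (n : ℝ) + 2) / 2) = Real.Gamma ((n : ℝ) + 1) := by
      ring_nf
    rw [hA, Real.Gamma_one_half_eq, div_eq_iff (by
      exact mul_ne_zero (hpos _ (by positivity)) (hpos _ (by positivity))),
      mul_comm (Real.Gamma (((n:ℝ)+2)/2)), this]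
    rw [Real.rpow_neg (by norm_num), Real.rpow_natCast]
    field_simp
end

section
/- For every positive integer n, (1/n!) · ∏_{j=0}^{n-1} [Γ((n+3+j)/2)·Γ(1/2) / (Γ((4+j)/2)·Γ((1+j)/2)·Γ((2+j)/2))] = ∏_{k=1}^{n} Cat(k), where Cat(k) = (1/(k+1))·binomial(2k, k) is the k-th Catalan number. -/
open Real Finset

/-- The k-th Catalan number as a real number: Cat(k) = (1/(k+1))·C(2k,k). -/
noncomputable def catR (k : ℕ) : ℝ := (1 / ((k : ℝ) + 1)) * (Nat.choose (2 * k) k : ℝ)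

lemma catR_eq (k : ℕ) :
    catR k = ((2 * k).factorial : ℝ) / ((k.factorial : ℝ) * ((k + 1).factorial : ℝ)) := by
  have h := Nat.choose_mul_factorial_mul_factorial (show k ≤ 2 * k by omega)
  have h' : ((2 * k).choose k : ℝ) * k.factorial * k.factorial = (2 * k).factorial := by
    rw [show 2 * k - k = k by omega] at h
    exact_mod_cast congrArg Nat.cast h
  have hk : (k.factorial : ℝ) ≠ 0 := Nat.cast_ne_zero.mpr k.factorial_ne_zero
  have hk1 : ((k + 1).factorial : ℝ) ≠ 0 := Nat.cast_ne_zero.mpr (k + 1).factorial_ne_zero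
  rw [catR, Nat.factorial_succ]
  push_cast
  field_simp
  nlinarith [h']

lemma dupl (j : ℕ) :
    Real.Gamma ((1 + (j : ℝ)) / 2) * Real.Gamma ((2 + (j : ℝ)) / 2) =
      Real.sqrt Real.pi * (j.factorial : ℝ) / 2 ^ j := by
  have h := Real.Gamma_mul_Gamma_add_half ((1 + (j : ℝ)) / 2)
  rw [show (1 + (j : ℝ)) / 2 + 1 / 2 = (2 + (j : ℝ)) / 2 by ring,
    show 2 * ((1 + (j : ℝ)) / 2) = (j : ℝ) + 1 by ring,
    show 1 - ((j : ℝ) + 1) = -(j : ℝ) by ring] at h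
  rw [h, Real.Gamma_nat_eq_factorial, Real.rpow_neg (by norm_num), Real.rpow_natCast]
  ring

lemma ghalf (k : ℕ) :
    Real.Gamma ((k : ℝ) + 1 / 2) =
      Real.sqrt Real.pi * ((2 * k).factorial : ℝ) / (4 ^ k * (k.factorial : ℝ)) := by
  have h := dupl (2 * k)
  rw [show (1 + ((2 * k : ℕ) : ℝ)) / 2 = (k : ℝ) + 1 / 2 by push_cast; ring,
    show (2 + ((2 * k : ℕ) : ℝ)) / 2 = (k : ℝ) + 1 by push_cast; ring,
    Real.Gamma_nat_eq_factorial] at h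
  have hk : (k.factorial : ℝ) ≠ 0 := Nat.cast_ne_zero.mpr k.factorial_ne_zero
  field_simp at h ⊢
  rw [show (4:ℝ)^k = 2^(2*k) by rw [pow_mul]; norm_num]
  linear_combination h

lemma key (n : ℕ) :
    Real.Gamma (((n : ℝ) + 3 + n) / 2) *
      (Real.Gamma (((n : ℝ) + 4 + n) / 2) * Real.Gamma (1 / 2) /
        (Real.Gamma ((4 + (n : ℝ)) / 2) * Real.Gamma ((1 + (n : ℝ)) / 2) *
          Real.Gamma ((2 + (n : ℝ)) / 2))) =
    Real.Gamma (((n : ℝ) + 3) / 2) * (((n : ℝ) + 1) * catR (n + 1)) := by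
  have d1 := dupl n
  have d2 := dupl (n + 2)
  rw [show (1 + ((n + 2 : ℕ) : ℝ)) / 2 = ((n : ℝ) + 3) / 2 by push_cast; ring,
    show (2 + ((n + 2 : ℕ) : ℝ)) / 2 = (4 + (n : ℝ)) / 2 by push_cast; ring] at d2
  rw [show ((n : ℝ) + 3 + n) / 2 = ((n + 1 : ℕ) : ℝ) + 1 / 2 by push_cast; ring, ghalf,
    show ((n : ℝ) + 4 + n) / 2 = ((n + 1 : ℕ) : ℝ) * 2 / 2 + 1 by push_cast; ring]
  rw [show ((n + 1 : ℕ) : ℝ) * 2 / 2 + 1 = (((n + 1 : ℕ)) : ℝ) + 1 by ring,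
    Real.Gamma_nat_eq_factorial, Real.Gamma_one_half_eq,
    show Real.Gamma ((4 + (n : ℝ)) / 2) * Real.Gamma ((1 + (n : ℝ)) / 2) *
        Real.Gamma ((2 + (n : ℝ)) / 2) =
      (Real.sqrt Real.pi * (n.factorial : ℝ) / 2 ^ n) * Real.Gamma ((4 + (n : ℝ)) / 2) by
        rw [← d1]; ring,
    catR_eq]
  have h4 : (0:ℝ) < Real.Gamma ((4 + (n : ℝ)) / 2) :=
    Real.Gamma_pos_of_pos (by positivity)
  have hsp : (0:ℝ) < Real.sqrt Real.pi := Real.sqrt_pos.mpr Real.pi_pos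
  have hf : ∀ m : ℕ, ((m.factorial : ℝ)) ≠ 0 := fun m => Nat.cast_ne_zero.mpr m.factorial_ne_zero
  have h3 : Real.Gamma (((n : ℝ) + 3) / 2) =
      Real.sqrt Real.pi * ((n + 2).factorial : ℝ) / 2 ^ (n + 2) / Real.Gamma ((4 + (n : ℝ)) / 2) := by
    rw [eq_div_iff (ne_of_gt h4)]
    exact d2
  rw [h3, show n + 1 + 1 = n + 2 from rfl,
    show ((n + 2).factorial : ℝ) = ((n:ℝ) + 2) * (((n:ℝ) + 1) * (n.factorial : ℝ)) by
      rw [show n + 2 = (n + 1) + 1 from rfl, Nat.factorial_succ, Nat.factorial_succ]; push_cast; ring,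
    show ((n + 1).factorial : ℝ) = ((n:ℝ) + 1) * (n.factorial : ℝ) by
      rw [Nat.factorial_succ]; push_cast; ring,
    show (4:ℝ) ^ (n + 1) = 2 ^ (n + 2) * 2 ^ n by
      rw [show (4:ℝ) = 2 * 2 by norm_num, mul_pow, ← pow_add, ← pow_add]; ring_nf]
  field_simp

/-- (1/n!)·∏_{j=0}^{n-1} Γ((n+3+j)/2)Γ(1/2)/(Γ((4+j)/2)Γ((1+j)/2)Γ((2+j)/2))
equals the product of the first n Catalan numbers. -/
theorem stmt2 (n : ℕ) (hn : 0 < n) :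
    (1 / (n.factorial : ℝ)) *
      ∏ j ∈ Finset.range n,
        Real.Gamma (((n : ℝ) + 3 + j) / 2) * Real.Gamma (1 / 2) /
          (Real.Gamma ((4 + (j : ℝ)) / 2) * Real.Gamma ((1 + (j : ℝ)) / 2) *
            Real.Gamma ((2 + (j : ℝ)) / 2)) =
      ∏ k ∈ Finset.Icc 1 n, catR k := by
  induction n, hn using Nat.le_induction with
  | base =>
    simp [catR]
    norm_num [Real.Gamma_two, Real.Gamma_one, show ((1:ℝ)+3+0)/2 = 2 by norm_num,
      show ((4:ℝ)+0)/2 = 2 by norm_num, show ((2:ℝ)+0)/2 = 1 by norm_num]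
    exact ne_of_gt (Real.Gamma_pos_of_pos (by norm_num))
  | succ n hn ih =>
    rw [Finset.prod_Icc_succ_top (by omega : 1 ≤ n + 1), ← ih, Finset.prod_range_succ]
    have hf0 : Real.Gamma (((n : ℝ) + 3) / 2) ≠ 0 :=
      (Real.Gamma_pos_of_pos (by positivity)).ne'
    have h1 : (∏ x ∈ Finset.range n,
          Real.Gamma (((((n + 1 : ℕ)) : ℝ) + 3 + (x : ℝ)) / 2) * Real.Gamma (1 / 2) /
            (Real.Gamma ((4 + (x : ℝ)) / 2) * Real.Gamma ((1 + (x : ℝ)) / 2) *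
              Real.Gamma ((2 + (x : ℝ)) / 2)))
        = (∏ x ∈ Finset.range n,
            (fun k : ℕ => Real.Gamma (((n : ℝ) + 3 + (k : ℝ)) / 2)) (x + 1)) *
          ∏ x ∈ Finset.range n, Real.Gamma (1 / 2) /
            (Real.Gamma ((4 + (x : ℝ)) / 2) * Real.Gamma ((1 + (x : ℝ)) / 2) *
              Real.Gamma ((2 + (x : ℝ)) / 2)) := by
      rw [← Finset.prod_mul_distrib]
      refine Finset.prod_congr rfl fun x _ => ?_
      rw [mul_div_assoc]
      congr 2
      push_cast; ring
    have h2 : (∏ j ∈ Finset.range n,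
          Real.Gamma (((n : ℝ) + 3 + (j : ℝ)) / 2) * Real.Gamma (1 / 2) /
            (Real.Gamma ((4 + (j : ℝ)) / 2) * Real.Gamma ((1 + (j : ℝ)) / 2) *
              Real.Gamma ((2 + (j : ℝ)) / 2)))
        = (∏ j ∈ Finset.range n, Real.Gamma (((n : ℝ) + 3 + (j : ℝ)) / 2)) *
          ∏ j ∈ Finset.range n, Real.Gamma (1 / 2) /
            (Real.Gamma ((4 + (j : ℝ)) / 2) * Real.Gamma ((1 + (j : ℝ)) / 2) *
              Real.Gamma ((2 + (j : ℝ)) / 2)) := by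
      rw [← Finset.prod_mul_distrib]
      exact Finset.prod_congr rfl fun x _ => mul_div_assoc _ _ _
    have h3 : (∏ x ∈ Finset.range n,
            (fun k : ℕ => Real.Gamma (((n : ℝ) + 3 + (k : ℝ)) / 2)) (x + 1)) *
          Real.Gamma (((n : ℝ) + 3) / 2)
        = (∏ j ∈ Finset.range n, Real.Gamma (((n : ℝ) + 3 + (j : ℝ)) / 2)) *
          Real.Gamma (((n : ℝ) + 3 + (n : ℝ)) / 2) := by
      rw [show ((n : ℝ) + 3) / 2 = ((n : ℝ) + 3 + ((0 : ℕ) : ℝ)) / 2 by norm_num,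
        ← Finset.prod_range_succ' (fun k : ℕ => Real.Gamma (((n : ℝ) + 3 + (k : ℝ)) / 2)) n,
        Finset.prod_range_succ]
    have hT : Real.Gamma ((((n + 1 : ℕ) : ℝ) + 3 + (n : ℝ)) / 2)
        = Real.Gamma (((n : ℝ) + 4 + (n : ℝ)) / 2) :=
      congrArg Real.Gamma (by push_cast; ring)
    have hkey := key n
    rw [h1, h2, hT]
    set A := ∏ j ∈ Finset.range n, Real.Gamma (((n : ℝ) + 3 + (j : ℝ)) / 2) with hA
    set U := ∏ j ∈ Finset.range n, Real.Gamma (1 / 2) /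
            (Real.Gamma ((4 + (j : ℝ)) / 2) * Real.Gamma ((1 + (j : ℝ)) / 2) *
              Real.Gamma ((2 + (j : ℝ)) / 2)) with hU
    set F1 := ∏ x ∈ Finset.range n,
            (fun k : ℕ => Real.Gamma (((n : ℝ) + 3 + (k : ℝ)) / 2)) (x + 1) with hF1
    set T := Real.Gamma (((n : ℝ) + 4 + (n : ℝ)) / 2) * Real.Gamma (1 / 2) /
            (Real.Gamma ((4 + (n : ℝ)) / 2) * Real.Gamma ((1 + (n : ℝ)) / 2) *
              Real.Gamma ((2 + (n : ℝ)) / 2)) with hTT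
    set f0 := Real.Gamma (((n : ℝ) + 3) / 2) with hf0d
    set fn := Real.Gamma (((n : ℝ) + 3 + (n : ℝ)) / 2) with hfnd
    have step2 : F1 * U * T = A * U * (((n : ℝ) + 1) * catR (n + 1)) := by
      apply mul_right_cancel₀ hf0
      calc F1 * U * T * f0 = (F1 * f0) * (U * T) := by ring
        _ = (A * fn) * (U * T) := by rw [h3]
        _ = (A * U) * (fn * T) := by ring
        _ = (A * U) * (f0 * (((n : ℝ) + 1) * catR (n + 1))) := by rw [hkey]
        _ = A * U * (((n : ℝ) + 1) * catR (n + 1)) * f0 := by ring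
    have hfact : (((n + 1).factorial : ℝ)) = ((n : ℝ) + 1) * (n.factorial : ℝ) := by
      rw [Nat.factorial_succ]; push_cast; ring
    have hnf : ((n.factorial : ℝ)) ≠ 0 := Nat.cast_ne_zero.mpr n.factorial_ne_zero
    have hn1 : ((n : ℝ) + 1) ≠ 0 := by positivity
    rw [step2, hfact]
    field_simp
end
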